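/- For a check node of degree d_c ≥ 3, computing the box-plus of d_c − 1 inputs by iterated pairwise box-plus operations yields an output whose magnitude differs from the min-sum output magnitude min_i |x_i| by at most ⌈log₂(d_c − 1)⌉·log 2: specifically, if all inputs x_1, ..., x_{d_c−1} are positive, then min_i x_i ≥ x_1 ⊞ ··· ⊞ x_{d_c−1} ≥ min_i x_i − ⌈log₂(d_c−1)⌉·log 2, provided the right-hand side quantity counts one correction of magnitude < log 2 per pairwise operation along any balanced binary combining tree of depth ⌈log₂(d_c−1)⌉. -/

import Mathlib

/-- Box-plus operator x ⊞ y = log((1+e^{x+y})/(e^x+e^y)). -/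
noncomputable def boxplus (x y : ℝ) : ℝ :=
  Real.log ((1 + Real.exp (x + y)) / (Real.exp x + Real.exp y))

/-- Iterated box-plus of a nonempty list of inputs. -/
noncomputable def boxplusList : List ℝ → ℝ
  | [] => 0
  | [a] => a
  | a :: b :: rest => boxplus a (boxplusList (b :: rest))

noncomputable def tauBP (x : ℝ) : ℝ := (Real.exp x - 1) / (Real.exp x + 1)

noncomputable def Lfun (t : ℝ) : ℝ := Real.log ((1 + t) / (1 - t))

lemma tau_lt_one (x : ℝ) : tauBP x < 1 := by
  have h : 0 < Real.exp x + 1 := by positivity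
  rw [tauBP, div_lt_one h]; linarith

lemma tau_gt_neg_one (x : ℝ) : -1 < tauBP x := by
  have h : 0 < Real.exp x + 1 := by positivity
  rw [tauBP, lt_div_iff₀ h]
  have := Real.exp_pos x; linarith

lemma tau_pos {x : ℝ} (hx : 0 < x) : 0 < tauBP x := by
  have h : 0 < Real.exp x + 1 := by positivity
  have h1 : 1 < Real.exp x := by
    nlinarith [Real.add_one_le_exp x]
  exact div_pos (by linarith) h

lemma tau_mono {x y : ℝ} (h : x ≤ y) : tauBP x ≤ tauBP y := by
  have hx : 0 < Real.exp x + 1 := by positivity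
  have hy : 0 < Real.exp y + 1 := by positivity
  have he : Real.exp x ≤ Real.exp y := Real.exp_le_exp.mpr h
  rw [tauBP, tauBP, div_le_div_iff₀ hx hy]
  nlinarith

lemma L_tau (x : ℝ) : Lfun (tauBP x) = x := by
  have hx : 0 < Real.exp x + 1 := by positivity
  have h1 : 1 + tauBP x = 2 * Real.exp x / (Real.exp x + 1) := by
    rw [tauBP]; field_simp; ring
  have h2 : 1 - tauBP x = 2 / (Real.exp x + 1) := by
    rw [tauBP]; field_simp; norm_num
  rw [Lfun, h1, h2]
  have : 2 * Real.exp x / (Real.exp x + 1) / (2 / (Real.exp x + 1)) = Real.exp x := by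
    field_simp
  rw [this, Real.log_exp]

lemma tau_L {t : ℝ} (h1 : -1 < t) (h2 : t < 1) : tauBP (Lfun t) = t := by
  have hpos : 0 < (1 + t) / (1 - t) := div_pos (by linarith) (by linarith)
  have he : Real.exp (Lfun t) = (1 + t) / (1 - t) := Real.exp_log hpos
  have h1t : (1:ℝ) - t ≠ 0 := by linarith
  have hnum : (1 + t) / (1 - t) - 1 = 2 * t / (1 - t) := by field_simp; ring
  have hden : (1 + t) / (1 - t) + 1 = 2 / (1 - t) := by field_simp; norm_num
  rw [tauBP, he, hnum, hden]
  rw [div_div_div_eq]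
  field_simp

lemma L_mono {a b : ℝ} (ha : -1 < a) (hb : b < 1) (hab : a ≤ b) : Lfun a ≤ Lfun b := by
  have h1 : 0 < 1 - a := by linarith
  have h2 : 0 < 1 - b := by linarith
  have hpa : 0 < (1 + a) / (1 - a) := div_pos (by linarith) h1
  apply Real.log_le_log hpa
  rw [div_le_div_iff₀ h1 h2]; nlinarith

lemma boxplus_eq (x y : ℝ) : boxplus x y = Lfun (tauBP x * tauBP y) := by
  have hx : 0 < Real.exp x + 1 := by positivity
  have hy : 0 < Real.exp y + 1 := by positivity
  have hxy : 0 < Real.exp x + Real.exp y := by positivity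
  rw [boxplus, Lfun, Real.exp_add]
  congr 1
  rw [tauBP, tauBP]
  have h1 : 1 + (Real.exp x - 1) / (Real.exp x + 1) * ((Real.exp y - 1) / (Real.exp y + 1))
      = 2 * (1 + Real.exp x * Real.exp y) / ((Real.exp x + 1) * (Real.exp y + 1)) := by
    field_simp; ring
  have h2 : 1 - (Real.exp x - 1) / (Real.exp x + 1) * ((Real.exp y - 1) / (Real.exp y + 1))
      = 2 * (Real.exp x + Real.exp y) / ((Real.exp x + 1) * (Real.exp y + 1)) := by
    field_simp; ring
  rw [h1, h2]
  field_simp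

lemma prod_bounds {l : List ℝ} (hpos : ∀ a ∈ l, 0 < a) :
    0 < (l.map tauBP).prod ∧ (l.map tauBP).prod ≤ 1 := by
  induction l with
  | nil => simp
  | cons a t ih =>
    have ha : 0 < a := hpos a (by simp)
    have ih' := ih (fun b hb => hpos b (List.mem_cons_of_mem _ hb))
    have h1 : 0 < tauBP a := tau_pos ha
    have h2 : tauBP a < 1 := tau_lt_one a
    simp only [List.map_cons, List.prod_cons]
    constructor
    · exact mul_pos h1 ih'.1
    · calc tauBP a * (t.map tauBP).prod ≤ 1 * 1 :=
        mul_le_mul (le_of_lt h2) ih'.2 (le_of_lt ih'.1) zero_le_one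
      _ = 1 := one_mul 1

lemma prod_lt_one {l : List ℝ} (hne : l ≠ []) (hpos : ∀ a ∈ l, 0 < a) :
    (l.map tauBP).prod < 1 := by
  cases l with
  | nil => exact absurd rfl hne
  | cons a t =>
    have ha : 0 < a := hpos a (by simp)
    have ht := prod_bounds (fun b hb => hpos b (List.mem_cons_of_mem _ hb))
    simp only [List.map_cons, List.prod_cons]
    calc tauBP a * (t.map tauBP).prod ≤ tauBP a * 1 :=
      mul_le_mul_of_nonneg_left ht.2 (le_of_lt (tau_pos ha))
    _ = tauBP a := mul_one _
    _ < 1 := tau_lt_one a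

lemma boxplusList_eq {l : List ℝ} (hne : l ≠ []) (hpos : ∀ a ∈ l, 0 < a) :
    boxplusList l = Lfun ((l.map tauBP).prod) := by
  induction l with
  | nil => exact absurd rfl hne
  | cons a t ih =>
    have ha : 0 < a := hpos a (by simp)
    cases t with
    | nil =>
      show a = _
      simp only [List.map_cons, List.map_nil, List.prod_cons, List.prod_nil, mul_one, L_tau]
    | cons b r =>
      have hposT : ∀ x ∈ b :: r, 0 < x := fun x hx => hpos x (List.mem_cons_of_mem _ hx)
      have ih' := ih (by simp) hposT
      have hP := prod_bounds hposT
      have hPlt := prod_lt_one (by simp) hposT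
      show boxplus a (boxplusList (b :: r)) = _
      rw [ih', boxplus_eq, tau_L (by linarith [hP.1]) hPlt]
      simp [List.prod_cons]

lemma list_prod_le_one {l : List ℝ} (h : ∀ a ∈ l, 0 ≤ a ∧ a ≤ 1) : l.prod ≤ 1 := by
  induction l with
  | nil => simp
  | cons a t ih =>
    have ih' := ih (fun b hb => h b (List.mem_cons_of_mem _ hb))
    have ha := h a (by simp)
    have htnn : 0 ≤ t.prod := List.prod_nonneg (fun b hb => (h b (List.mem_cons_of_mem _ hb)).1)
    simp only [List.prod_cons]
    calc a * t.prod ≤ 1 * 1 := mul_le_mul ha.2 ih' htnn zero_le_one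
    _ = 1 := one_mul 1

lemma prod_le_mem {l : List ℝ} {x : ℝ} (hx : x ∈ l)
    (hb : ∀ a ∈ l, 0 < a ∧ a ≤ 1) : l.prod ≤ x := by
  induction l with
  | nil => simp at hx
  | cons a t ih =>
    have hprodpos : 0 < t.prod := by
      apply List.prod_pos; intro b hb'; exact (hb b (List.mem_cons_of_mem _ hb')).1
    have hprodle : t.prod ≤ 1 :=
      list_prod_le_one (fun b hb' => ⟨le_of_lt (hb b (List.mem_cons_of_mem _ hb')).1,
        (hb b (List.mem_cons_of_mem _ hb')).2⟩)
    rcases List.mem_cons.mp hx with h | h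
    · subst h
      simp only [List.prod_cons]
      calc x * t.prod ≤ x * 1 :=
        mul_le_mul_of_nonneg_left hprodle (le_of_lt (hb x (by simp)).1)
      _ = x := mul_one x
    · have := ih h (fun b hb' => hb b (List.mem_cons_of_mem _ hb'))
      simp only [List.prod_cons]
      calc a * t.prod ≤ 1 * t.prod :=
        mul_le_mul_of_nonneg_right (hb a (by simp)).2 (le_of_lt hprodpos)
      _ = t.prod := one_mul _
      _ ≤ x := this

lemma pow_le_prod {l : List ℝ} {c : ℝ} (hc : 0 ≤ c) (hb : ∀ a ∈ l, c ≤ a) :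
    c ^ l.length ≤ l.prod := by
  induction l with
  | nil => simp
  | cons a t ih =>
    have ih' := ih (fun b hb' => hb b (List.mem_cons_of_mem _ hb'))
    simp only [List.prod_cons, List.length_cons, pow_succ]
    have hcp : 0 ≤ c ^ t.length := pow_nonneg hc _
    calc c ^ t.length * c ≤ t.prod * a := by
          apply mul_le_mul ih' (hb a (by simp)) hc
          calc (0:ℝ) ≤ c ^ t.length := hcp
          _ ≤ t.prod := ih'
    _ = a * t.prod := mul_comm _ _

lemma L_sq {s : ℝ} (h0 : 0 < s) (h1 : s < 1) : Lfun s - Real.log 2 ≤ Lfun (s ^ 2) := by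
  have hs2 : s ^ 2 < 1 := by nlinarith
  have hd1 : 0 < 1 - s := by linarith
  have hd2 : 0 < 1 - s ^ 2 := by linarith
  rw [sub_le_iff_le_add, Lfun, Lfun, ← Real.log_mul (by positivity) (by norm_num)]
  apply Real.log_le_log (by positivity)
  rw [mul_comm, ← mul_div_assoc, div_le_div_iff₀ hd1 hd2]
  nlinarith [mul_nonneg hd1.le (sq_nonneg (1 - s))]

lemma L_pow (k : ℕ) {t : ℝ} (h0 : 0 < t) (h1 : t < 1) :
    Lfun t - (k : ℝ) * Real.log 2 ≤ Lfun (t ^ (2 ^ k)) := by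
  induction k with
  | zero => simp
  | succ n ih =>
    have hp0 : 0 < t ^ (2 ^ n) := pow_pos h0 _
    have hp1 : t ^ (2 ^ n) < 1 := pow_lt_one₀ (le_of_lt h0) h1 (by positivity)
    have := L_sq hp0 hp1
    have heq : (t ^ (2 ^ n)) ^ 2 = t ^ (2 ^ (n + 1)) := by
      rw [← pow_mul, pow_succ]
    rw [heq] at this
    push_cast
    linarith

theorem checknode_boxplus_vs_minsum (dc : ℕ) (hdc : 3 ≤ dc)
    (l : List ℝ) (hlen : l.length = dc - 1) (hpos : ∀ a ∈ l, 0 < a)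
    (m : ℝ) (hmem : m ∈ l) (hmin : ∀ a ∈ l, m ≤ a) :
    m ≥ boxplusList l ∧
      boxplusList l ≥ m - (Nat.clog 2 (dc - 1) : ℝ) * Real.log 2 := by
  have hm : 0 < m := hpos m hmem
  have hne : l ≠ [] := by intro h; subst h; simp at hmem
  have heq := boxplusList_eq hne hpos
  set P := (l.map tauBP).prod with hPdef
  have hPb := prod_bounds hpos
  have hPlt := prod_lt_one hne hpos
  set t := tauBP m with htdef
  have ht0 : 0 < t := tau_pos hm
  have ht1 : t < 1 := tau_lt_one m
  -- upper bound : P ≤ t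
  have hPle : P ≤ t := by
    apply prod_le_mem (List.mem_map_of_mem (f := tauBP) hmem)
    intro a ha
    obtain ⟨b, hb, rfl⟩ := List.mem_map.mp ha
    exact ⟨tau_pos (hpos b hb), le_of_lt (tau_lt_one b)⟩
  -- lower bound: t^n ≤ P
  have hPge : t ^ l.length ≤ P := by
    rw [hPdef, ← List.length_map tauBP]
    apply pow_le_prod (le_of_lt ht0)
    intro a ha
    obtain ⟨b, hb, rfl⟩ := List.mem_map.mp ha
    exact tau_mono (hmin b hb)
  set k := Nat.clog 2 (dc - 1) with hkdef
  have hnle : l.length ≤ 2 ^ k := by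
    rw [hlen, hkdef]; exact Nat.le_pow_clog (by norm_num) _
  have hpow : t ^ (2 ^ k) ≤ t ^ l.length :=
    pow_le_pow_of_le_one (le_of_lt ht0) (le_of_lt ht1) hnle
  constructor
  · rw [heq]
    calc Lfun P ≤ Lfun t := L_mono (by linarith [hPb.1]) ht1 hPle
    _ = m := L_tau m
  · rw [heq]
    have h1 : Lfun (t ^ (2 ^ k)) ≤ Lfun P := by
      apply L_mono _ hPlt (le_trans hpow hPge)
      have : 0 < t ^ (2 ^ k) := pow_pos ht0 _
      linarith
    have h2 := L_pow k ht0 ht1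
    rw [L_tau m] at h2
    linarith
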